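/- Let M₁,…,M_k be matroids on a common finite ground set U, with F_j the independent sets of M_j, and let S, T ∈ ⋂_{j=1}^k F_j. Then there exists a mapping b : T \ S → {subsets of S \ T of size at most k} such that for each x ∈ T \ S, (S \ b(x)) ∪ {x} ∈ ⋂_{j=1}^k F_j, and each element u ∈ S \ T appears in at most k of the sets b(x). -/

import Mathlib

open Finset

section Aux

variable {α : Type*}

lemma aux_encard_le {M : Matroid α} {I J : Set α} (hI : M.Indep I) (hJ : M.Indep J)
    (hIJ : I ⊆ M.closure J) : I.encard ≤ J.encard := by
  obtain ⟨I', hI', hII'⟩ := hI.subset_isBasis_of_subset hIJ (M.closure_subset_ground J)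
  calc I.encard ≤ I'.encard := Set.encard_mono hII'
    _ = J.encard := hI'.encard_eq_encard hJ.isBasis_closure

/-- Core single-matroid lemma. -/
lemma aux_core [DecidableEq α] (M : Matroid α) (S T : Finset α)
    (hS : M.Indep (S : Set α)) (hT : M.Indep (T : Set α)) :
    ∃ g : α → Finset α,
      (∀ x ∈ T \ S, g x ⊆ S \ T ∧ (g x).card ≤ 1 ∧
        M.Indep (((S : Set α) \ (g x : Set α)) ∪ {x})) ∧
      (∀ u ∈ S \ T, ((T \ S).filter (fun x => u ∈ g x)).card ≤ 1) := by
  classical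
  set D : Finset α := (T \ S).filter (fun x => ¬ M.Indep (insert x (S : Set α))) with hD
  -- choose minimal-cardinality subset C x of S with x ∈ closure (C x)
  have hCex : ∀ x ∈ D, ∃ C ∈ S.powerset.filter (fun (C : Finset α) => x ∈ M.closure (C : Set α)),
      ∀ C' ∈ S.powerset.filter (fun (C : Finset α) => x ∈ M.closure (C : Set α)), C.card ≤ C'.card := by
    intro x hx
    apply Finset.exists_min_image
    rw [Finset.filter_nonempty_iff]
    refine ⟨S, Finset.mem_powerset_self S, ?_⟩
    simp only [hD, Finset.mem_filter, Finset.mem_sdiff] at hx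
    have hxS : x ∉ (S : Set α) := by simpa using hx.1.2
    rw [hS.mem_closure_iff_of_notMem hxS, Matroid.Dep]
    refine ⟨hx.2, Set.insert_subset ?_ hS.subset_ground⟩
    exact hT.subset_ground (by simpa using hx.1.1)
  choose! C hC hCmin using hCex
  have hCS : ∀ x ∈ D, C x ⊆ S := fun x hx =>
    Finset.mem_powerset.1 (Finset.mem_filter.1 (hC x hx)).1
  have hCcl : ∀ x ∈ D, x ∈ M.closure (C x : Set α) := fun x hx =>
    (Finset.mem_filter.1 (hC x hx)).2
  -- key swap property
  have key : ∀ x ∈ D, ∀ u ∈ C x, M.Indep (insert x ((S : Set α) \ {u})) := by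
    intro x hx u hu
    simp only [hD, Finset.mem_filter, Finset.mem_sdiff] at hx
    have hxT : x ∈ T := hx.1.1
    have hxS : x ∉ (S : Set α) := by simpa using hx.1.2
    have hxD : x ∈ D := by
      simp only [hD, Finset.mem_filter, Finset.mem_sdiff]; exact hx
    have hSu : M.Indep ((S : Set α) \ {u}) := hS.subset Set.diff_subset
    have huS : u ∈ S := hCS x hxD hu
    have hxcl : x ∉ M.closure ((S : Set α) \ {u}) := by
      intro hmem
      -- minimality: x ∉ closure (C x \ {u})
      have hxnot : x ∉ M.closure (((C x).erase u : Finset α) : Set α) := by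
        intro h'
        have h1 : (C x).erase u ∈ S.powerset.filter (fun (C : Finset α) => x ∈ M.closure (C : Set α)) := by
          rw [Finset.mem_filter, Finset.mem_powerset]
          exact ⟨(Finset.erase_subset u (C x)).trans (hCS x hxD), by simpa using h'⟩
        have h2 := hCmin x hxD _ h1
        have h3 : ((C x).erase u).card < (C x).card := Finset.card_erase_lt_of_mem hu
        omega
      have hCe : ((C x).erase u : Set α) = (C x : Set α) \ {u} := by
        simp [Finset.coe_erase]
      rw [hCe] at hxnot
      have hins : (insert u ((C x : Set α) \ {u})) = (C x : Set α) := by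
        rw [Set.insert_diff_singleton]
        exact Set.insert_eq_of_mem (by exact_mod_cast hu)
      have hxin : x ∈ M.closure (insert u ((C x : Set α) \ {u})) \
          M.closure ((C x : Set α) \ {u}) := by
        rw [hins]; exact ⟨hCcl x hxD, hxnot⟩
      have hux := Matroid.closure_exchange hxin
      have hux' : u ∈ M.closure (insert x ((S : Set α) \ {u})) :=
        M.closure_subset_closure
          (Set.insert_subset_insert (Set.diff_subset_diff_left (by exact_mod_cast hCS x hxD)))
          hux.1
      rw [Matroid.closure_insert_eq_of_mem_closure hmem] at hux'
      have : u ∉ M.closure ((S : Set α) \ {u}) := hS.notMem_closure_sdiff_of_mem (by simpa using huS)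
      exact this hux'
    have hxE : x ∈ M.E := hT.subset_ground (by simpa using hxT)
    rw [hSu.insert_indep_iff_of_notMem (by simp [hxS])]
    exact ⟨hxE, hxcl⟩
  -- Hall's theorem
  set N : {x // x ∈ D} → Finset α := fun x => C x.1 ∩ (S \ T) with hN
  have hall : ∀ s : Finset {x // x ∈ D}, s.card ≤ (s.biUnion N).card := by
    intro s
    set X : Finset α := s.image Subtype.val with hX
    have hXcard : X.card = s.card := Finset.card_image_of_injective _ Subtype.val_injective
    have hXTS : X ⊆ T \ S := fun a ha => by
      obtain ⟨⟨b, hb⟩, _, rfl⟩ := Finset.mem_image.1 ha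
      exact (Finset.mem_filter.1 hb).1
    set A : Finset α := (S ∩ T) ∪ s.biUnion N with hA
    have hAS : A ⊆ S := by
      intro a ha
      rcases Finset.mem_union.1 ha with h | h
      · exact (Finset.mem_inter.1 h).1
      · obtain ⟨x, _, hx⟩ := Finset.mem_biUnion.1 h
        exact hCS x.1 x.2 (Finset.mem_inter.1 hx).1
    have hAind : M.Indep (A : Set α) := hS.subset (by exact_mod_cast hAS)
    have hsub : ((X ∪ (S ∩ T) : Finset α) : Set α) ⊆ M.closure (A : Set α) := by
      intro a ha
      rw [Finset.coe_union, Set.mem_union] at ha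
      rcases ha with h | h
      · -- a ∈ X : a ∈ closure (C a) ⊆ closure A
        have haX : a ∈ X := by exact_mod_cast h
        obtain ⟨⟨b, hb⟩, hbs, rfl⟩ := Finset.mem_image.1 haX
        refine M.closure_subset_closure ?_ (hCcl b hb)
        intro c hc
        have hcC : c ∈ C b := by exact_mod_cast hc
        have hcS : c ∈ S := hCS b hb hcC
        by_cases hcT : c ∈ T
        · exact_mod_cast Finset.mem_union_left _ (Finset.mem_inter.2 ⟨hcS, hcT⟩)
        · refine Finset.mem_coe.2 (Finset.mem_union_right _ (Finset.mem_biUnion.2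
            ⟨⟨b, hb⟩, hbs, ?_⟩))
          exact Finset.mem_inter.2 ⟨hcC, Finset.mem_sdiff.2 ⟨hcS, hcT⟩⟩
      · have haA : a ∈ A := Finset.mem_union_left _ (by exact_mod_cast h)
        exact M.subset_closure (A : Set α) hAind.subset_ground (Finset.mem_coe.2 haA)
    have hXTind : M.Indep ((X ∪ (S ∩ T) : Finset α) : Set α) := by
      refine hT.subset ?_
      intro a ha
      rw [Finset.coe_union, Set.mem_union] at ha
      rcases ha with h | h
      · exact Finset.mem_coe.2 (Finset.mem_sdiff.1 (hXTS (by exact_mod_cast h))).1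
      · exact Finset.mem_coe.2 (Finset.mem_inter.1 (by exact_mod_cast h)).2
    have hcard := aux_encard_le hXTind hAind hsub
    rw [Set.encard_coe_eq_coe_finsetCard, Set.encard_coe_eq_coe_finsetCard] at hcard
    have hcard' : (X ∪ (S ∩ T)).card ≤ A.card := by exact_mod_cast hcard
    have hdisj : Disjoint X (S ∩ T) := by
      refine Finset.disjoint_left.2 fun a ha ha' => ?_
      exact (Finset.mem_sdiff.1 (hXTS ha)).2 (Finset.mem_inter.1 ha').1
    rw [Finset.card_union_of_disjoint hdisj] at hcard'
    have hAcard : A.card ≤ (S ∩ T).card + (s.biUnion N).card := Finset.card_union_le _ _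
    omega
  obtain ⟨f, hfinj, hfmem⟩ := (Finset.all_card_le_biUnion_card_iff_exists_injective N).1 hall
  refine ⟨fun x => if h : x ∈ D then {f ⟨x, h⟩} else ∅, ?_, ?_⟩
  · intro x hx
    by_cases hxD : x ∈ D
    · have hfx := hfmem ⟨x, hxD⟩
      rw [hN] at hfx
      have hfx1 : f ⟨x, hxD⟩ ∈ C x := (Finset.mem_inter.1 hfx).1
      have hfx2 : f ⟨x, hxD⟩ ∈ S \ T := (Finset.mem_inter.1 hfx).2
      simp only [dif_pos hxD]
      refine ⟨Finset.singleton_subset_iff.2 hfx2, by simp, ?_⟩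
      have := key x hxD _ hfx1
      have heq : ((S : Set α) \ (({f ⟨x, hxD⟩} : Finset α) : Set α)) ∪ {x}
          = insert x ((S : Set α) \ {f ⟨x, hxD⟩}) := by
        rw [Finset.coe_singleton, Set.union_singleton]
      rw [heq]
      exact this
    · simp only [dif_neg hxD]
      refine ⟨Finset.empty_subset _, by simp, ?_⟩
      have hxind : M.Indep (insert x (S : Set α)) := by
        by_contra hcon
        exact hxD (Finset.mem_filter.2 ⟨hx, hcon⟩)
      have heq : ((S : Set α) \ ((∅ : Finset α) : Set α)) ∪ {x} = insert x (S : Set α) := by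
        simp [Set.union_singleton]
      rw [heq]
      exact hxind
  · intro u hu
    rw [Finset.card_le_one]
    intro a ha b hb
    simp only [Finset.mem_filter] at ha hb
    by_cases haD : a ∈ D
    · by_cases hbD : b ∈ D
      · have ha' : f ⟨a, haD⟩ = u := by
          have := ha.2; rw [dif_pos haD] at this; exact (Finset.mem_singleton.1 this).symm
        have hb' : f ⟨b, hbD⟩ = u := by
          have := hb.2; rw [dif_pos hbD] at this; exact (Finset.mem_singleton.1 this).symm
        have := hfinj (ha'.trans hb'.symm)
        exact congrArg Subtype.val this
      · exfalso; have := hb.2; rw [dif_neg hbD] at this; simp at this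
    · exfalso; have := ha.2; rw [dif_neg haD] at this; simp at this

end Aux

/-- Swap-mapping lemma for `k` matroids: given sets `S, T` independent in each
of `k` matroids on a common finite ground set, there is a mapping `b` from
`T \ S` to subsets of `S \ T` of size at most `k` such that each `k`-swap
`(S \ b x) ∪ {x}` is independent in every matroid, and each `u ∈ S \ T`
appears in at most `k` of the sets `b x`. -/
theorem stmt_5 {α : Type*} [Fintype α] [DecidableEq α] (k : ℕ) (hk : 0 < k)
    (M : Fin k → Matroid α) (S T : Finset α)
    (hS : ∀ j, (M j).Indep (S : Set α)) (hT : ∀ j, (M j).Indep (T : Set α)) :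
    ∃ b : α → Finset α,
      (∀ x ∈ T \ S, b x ⊆ S \ T ∧ (b x).card ≤ k ∧
        ∀ j, (M j).Indep (((S : Set α) \ (b x : Set α)) ∪ {x})) ∧
      (∀ u ∈ S \ T, ((T \ S).filter (fun x => u ∈ b x)).card ≤ k) := by
  classical
  choose g hg1 hg2 using fun j => aux_core (M j) S T (hS j) (hT j)
  refine ⟨fun x => Finset.univ.biUnion (fun j : Fin k => g j x), ?_, ?_⟩
  · intro x hx
    refine ⟨?_, ?_, ?_⟩
    · exact Finset.biUnion_subset.2 fun j _ => (hg1 j x hx).1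
    · calc (Finset.univ.biUnion (fun j : Fin k => g j x)).card
          ≤ ∑ j : Fin k, (g j x).card := Finset.card_biUnion_le
        _ ≤ ∑ _j : Fin k, 1 := Finset.sum_le_sum fun j _ => (hg1 j x hx).2.1
        _ = k := by simp
    · intro j
      refine ((hg1 j x hx).2.2).subset ?_
      apply Set.union_subset_union_left
      apply Set.diff_subset_diff_right
      exact_mod_cast Finset.subset_biUnion_of_mem (fun j : Fin k => g j x)
        (Finset.mem_univ j)
  · intro u hu
    have hsub : (T \ S).filter (fun x => u ∈ Finset.univ.biUnion (fun j : Fin k => g j x))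
        ⊆ Finset.univ.biUnion (fun j : Fin k => (T \ S).filter (fun x => u ∈ g j x)) := by
      intro x hx
      rw [Finset.mem_filter] at hx
      obtain ⟨j, _, hj⟩ := Finset.mem_biUnion.1 hx.2
      exact Finset.mem_biUnion.2 ⟨j, Finset.mem_univ j, Finset.mem_filter.2 ⟨hx.1, hj⟩⟩
    calc ((T \ S).filter (fun x => u ∈ Finset.univ.biUnion (fun j : Fin k => g j x))).card
        ≤ (Finset.univ.biUnion (fun j : Fin k => (T \ S).filter (fun x => u ∈ g j x))).card :=
          Finset.card_le_card hsub
      _ ≤ ∑ j : Fin k, ((T \ S).filter (fun x => u ∈ g j x)).card := Finset.card_biUnion_le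
      _ ≤ ∑ _j : Fin k, 1 := Finset.sum_le_sum fun j _ => hg2 j u hu
      _ = k := by simp
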